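/- Let ((x_n,y_n))_{n∈ℕ} be a sequence in [0,∞)² such that the series ∑_n (x_n,y_n) converges, let E := E(x_n,y_n) be its achievement set in ℝ², and let k ∈ ℕ. Then: (a) if A := {n : x_n < x_k} satisfies x_k > ∑_{n∈A} x_n, then the interval (∑_{n∈A} x_n, x_k) is an x-gap of E; (b) if A := {n : y_n < y_k} satisfies y_k > ∑_{n∈A} y_n, then (∑_{n∈A} y_n, y_k) is a y-gap of E; (c) if {n : x_n < x_k} = {n : y_n < y_k} =: A and both x_k > ∑_{n∈A} x_n and y_k > ∑_{n∈A} y_n, then the set (∑_{n∈A} x_n, x_k) × (∑_{n∈A} y_n, y_k) is a rectangular gap of E. -/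

import Mathlib

/-- The achievement set of a series in the plane: the set of all its subsums. -/
def achv2 (x y : ℕ → ℝ) : Set (ℝ × ℝ) :=
  {p | ∃ A : Set ℕ, p = (∑' n : A, x n, ∑' n : A, y n)}

/-- `(a,b) × (c,d)` is a rectangular gap of `A`. -/
def IsRectGap (A : Set (ℝ × ℝ)) (a b c d : ℝ) : Prop :=
  (Set.Icc a b ×ˢ Set.Icc c d) ∩ A = ({(a, c), (b, d)} : Set (ℝ × ℝ))

/-- `(a,b)` is an `x`-gap of `A`. -/
def IsXGap (A : Set (ℝ × ℝ)) (a b : ℝ) : Prop :=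
  (∃ c, (a, c) ∈ A) ∧ (∃ d, (b, d) ∈ A) ∧ (Set.Ioo a b ×ˢ (Set.univ : Set ℝ)) ∩ A = ∅

/-- `(c,d)` is a `y`-gap of `A`. -/
def IsYGap (A : Set (ℝ × ℝ)) (c d : ℝ) : Prop :=
  (∃ a, (a, c) ∈ A) ∧ (∃ b, (b, d) ∈ A) ∧ ((Set.univ : Set ℝ) ×ˢ Set.Ioo c d) ∩ A = ∅

lemma tsum_subset_le' (x : ℕ → ℝ) (hx0 : ∀ n, 0 ≤ x n) (hx : Summable x)
    {B C : Set ℕ} (h : B ⊆ C) : ∑' n : B, x n ≤ ∑' n : C, x n := by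
  rw [tsum_subtype, tsum_subtype]
  refine Summable.tsum_le_tsum (fun n => ?_) (hx.indicator B) (hx.indicator C)
  exact Set.indicator_le_indicator_of_subset h (fun n => hx0 n) n

lemma single_le_tsum' (x : ℕ → ℝ) (hx0 : ∀ n, 0 ≤ x n) (hx : Summable x)
    {B : Set ℕ} {m : ℕ} (hm : m ∈ B) : x m ≤ ∑' n : B, x n :=
  Summable.le_tsum (hx.subtype B) ⟨m, hm⟩ (fun j _ => hx0 j.1)

/-- Key dichotomy: any subsum is either ≤ the sum over `{n | x n < x k}` or ≥ `x k`. -/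
lemma key_dichotomy (x : ℕ → ℝ) (hx0 : ∀ n, 0 ≤ x n) (hx : Summable x) (k : ℕ)
    (B : Set ℕ) :
    (∑' n : B, x n) ≤ (∑' n : {n : ℕ | x n < x k}, x n) ∨ x k ≤ ∑' n : B, x n := by
  by_cases h : B ⊆ {n : ℕ | x n < x k}
  · exact Or.inl (tsum_subset_le' x hx0 hx h)
  · obtain ⟨m, hmB, hm⟩ := Set.not_subset.mp h
    exact Or.inr (le_trans (not_lt.mp hm) (single_le_tsum' x hx0 hx hmB))

theorem first_gap_lemma_plane (x y : ℕ → ℝ) (hx0 : ∀ n, 0 ≤ x n) (hy0 : ∀ n, 0 ≤ y n)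
    (hx : Summable x) (hy : Summable y) (k : ℕ) :
    ((∑' n : {n : ℕ | x n < x k}, x n) < x k →
      IsXGap (achv2 x y) (∑' n : {n : ℕ | x n < x k}, x n) (x k)) ∧
    ((∑' n : {n : ℕ | y n < y k}, y n) < y k →
      IsYGap (achv2 x y) (∑' n : {n : ℕ | y n < y k}, y n) (y k)) ∧
    ({n : ℕ | x n < x k} = {n : ℕ | y n < y k} →
      (∑' n : {n : ℕ | x n < x k}, x n) < x k →
      (∑' n : {n : ℕ | x n < x k}, y n) < y k →
      IsRectGap (achv2 x y) (∑' n : {n : ℕ | x n < x k}, x n) (x k)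
        (∑' n : {n : ℕ | x n < x k}, y n) (y k)) := by
  have hA : ∀ B : Set ℕ, (⟨∑' n : B, x n, ∑' n : B, y n⟩ : ℝ × ℝ) ∈ achv2 x y :=
    fun B => ⟨B, rfl⟩
  have hk : ∀ f : ℕ → ℝ, (∑' n : ({k} : Set ℕ), f n) = f k := fun f => tsum_singleton k f
  refine ⟨?_, ?_, ?_⟩
  · intro h
    refine ⟨⟨_, hA _⟩, ⟨∑' n : ({k} : Set ℕ), y n, ?_⟩, ?_⟩
    · have := hA ({k} : Set ℕ); rwa [hk x] at this
    · ext p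
      simp only [Set.mem_inter_iff, Set.mem_prod, Set.mem_Ioo, Set.mem_empty_iff_false,
        iff_false, not_and, and_imp]
      rintro h1 h2 _ ⟨B, hB⟩
      rcases key_dichotomy x hx0 hx k B with hle | hge
      · rw [hB] at h1; exact absurd h1 (not_lt.mpr hle)
      · rw [hB] at h2; exact absurd h2 (not_lt.mpr hge)
  · intro h
    refine ⟨⟨_, hA _⟩, ⟨∑' n : ({k} : Set ℕ), x n, ?_⟩, ?_⟩
    · have := hA ({k} : Set ℕ); rwa [hk y] at this
    · ext p
      simp only [Set.mem_inter_iff, Set.mem_prod, Set.mem_Ioo, Set.mem_empty_iff_false,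
        iff_false, not_and, and_imp]
      rintro _ h1 h2 ⟨B, hB⟩
      rcases key_dichotomy y hy0 hy k B with hle | hge
      · rw [hB] at h1; exact absurd h1 (not_lt.mpr hle)
      · rw [hB] at h2; exact absurd h2 (not_lt.mpr hge)
  · intro hAB hxk hyk
    ext p
    simp only [IsRectGap, Set.mem_inter_iff, Set.mem_prod, Set.mem_Icc, Set.mem_insert_iff,
      Set.mem_singleton_iff, Prod.ext_iff]
    constructor
    · rintro ⟨⟨⟨h1, h2⟩, h3, h4⟩, B, hB⟩
      subst hB
      simp only at h1 h2 h3 h4 ⊢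
      rcases key_dichotomy x hx0 hx k B with hle | hge
      · left
        have hBsub : B ⊆ {n : ℕ | x n < x k} := by
          intro m hm
          by_contra hm'
          have hge' := le_trans (not_lt.mp hm') (single_le_tsum' x hx0 hx hm)
          exact absurd hxk (not_lt.mpr (le_trans hge' hle))
        exact ⟨le_antisymm hle h1, le_antisymm (tsum_subset_le' y hy0 hy hBsub) h3⟩
      · right
        obtain ⟨m, hmB, hm⟩ : ∃ m ∈ B, ¬ x m < x k := by
          by_contra hc
          push_neg at hc
          exact absurd (tsum_subset_le' x hx0 hx (fun m hm => hc m hm))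
            (not_le.mpr (lt_of_lt_of_le hxk hge))
        have hmy : ¬ y m < y k := by
          intro hc
          have hmem : m ∈ {n : ℕ | y n < y k} := hc
          rw [← hAB] at hmem
          exact hm hmem
        have hygek : y k ≤ ∑' n : B, y n := le_trans (not_lt.mp hmy)
          (single_le_tsum' y hy0 hy hmB)
        exact ⟨le_antisymm h2 hge, le_antisymm h4 hygek⟩
    · rintro (⟨h1, h2⟩ | ⟨h1, h2⟩)
      · exact ⟨⟨⟨h1.ge, h1.le.trans hxk.le⟩, h2.ge, h2.le.trans hyk.le⟩,
          ⟨{n : ℕ | x n < x k}, Prod.ext h1 h2⟩⟩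
      · refine ⟨⟨⟨hxk.le.trans h1.ge, h1.le⟩, hyk.le.trans h2.ge, h2.le⟩,
          ⟨({k} : Set ℕ), Prod.ext ?_ ?_⟩⟩ <;> simp [hk, h1, h2]
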